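/- arXiv:1402.4867 — 2 statements merged into one kernel-verified Lean document; each statement's English description precedes it below -/
import Mathlib

section
/- Let S be a finite set of positive integers, let π be a permutation of S, and let Q = (q₁,…,q_m) be a sequence of cyclically adjacent swaps for π resulting in permutation σ. Fix k ∈ S, let Q' be the sequence obtained from Q by deleting all swaps involving element k, and let π' be any permutation corresponding to π restricted to S ∖ {k}. Then Q' is a valid sequence of cyclically adjacent swaps for π', and performing Q' on π' results in a permutation corresponding to σ restricted to S ∖ {k}. -/
/-- The cyclic successor of `p` in the finite set `S`: the smallest element of `S`
greater than `p`, or `min S` if no such element exists. -/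
def cycSucc (S : Finset ℕ) (p : ℕ) : ℕ :=
  if h : (S.filter (fun q => p < q)).Nonempty then (S.filter (fun q => p < q)).min' h
  else if h' : S.Nonempty then S.min' h' else 0

/-- `π` is a permutation of the set `S`: it fixes every point outside `S`. -/
def IsPermOf (S : Finset ℕ) (π : Equiv.Perm ℕ) : Prop :=
  ∀ x, x ∉ S → π x = x

/-- Applying the swap `q = (i, j)` to `π`: elements `i` and `j` exchange positions
(element `i` moves clockwise, element `j` moves counterclockwise). -/
def applySwap (π : Equiv.Perm ℕ) (q : ℕ × ℕ) : Equiv.Perm ℕ :=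
  π.trans (Equiv.swap (π q.1) (π q.2))

/-- `q = (i, j)` is a cyclically adjacent swap for the permutation `π` of `S`:
element `j` occupies the position that is the cyclic successor (in `S`) of the
position of element `i`. -/
def IsCycSwap (S : Finset ℕ) (π : Equiv.Perm ℕ) (q : ℕ × ℕ) : Prop :=
  q.1 ∈ S ∧ q.2 ∈ S ∧ π q.2 = cycSucc S (π q.1)

/-- `Q` is a valid sequence of cyclically adjacent swaps for the permutation `π` of `S`. -/
def IsSwapSeq (S : Finset ℕ) : Equiv.Perm ℕ → List (ℕ × ℕ) → Prop
  | _, [] => True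
  | π, q :: Q => IsCycSwap S π q ∧ IsSwapSeq S (applySwap π q) Q

/-- The permutation resulting from applying the swaps of `Q` in order to `π`. -/
def applySwaps (π : Equiv.Perm ℕ) (Q : List (ℕ × ℕ)) : Equiv.Perm ℕ :=
  Q.foldl applySwap π

/-- `c(i,j)`: the number of times the swap `(i,j)` occurs in `Q` minus the number of
times the swap `(j,i)` occurs in `Q`. -/
def swapCount (Q : List (ℕ × ℕ)) (i j : ℕ) : ℤ :=
  (Q.count (i, j) : ℤ) - (Q.count (j, i) : ℤ)

/-- `d(i) = ∑_{j ≠ i} c(i,j)`: the net clockwise displacement of element `i ∈ S`. -/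
def netDisp (S : Finset ℕ) (Q : List (ℕ × ℕ)) (i : ℕ) : ℤ :=
  ∑ j ∈ S.erase i, swapCount Q i j

/-- `i` is directly before `j` in the permutation `π` of `S`. -/
def DirBefore (S : Finset ℕ) (π : Equiv.Perm ℕ) (i j : ℕ) : Prop :=
  (π i < π j ∧ ∀ ℓ ∈ S, ¬(π i < π ℓ ∧ π ℓ < π j)) ∨
    (S.max = (π i : WithBot ℕ) ∧ S.min = (π j : WithTop ℕ))

/-- `π'` is a permutation corresponding to `π` restricted to `S \ {k}`: it is a
permutation of `S.erase k` preserving the directly-before relationship, i.e.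
`i ≺ j` in `π'` whenever `i ≺ j` in `π` or `i ≺ k ≺ j` in `π`. -/
def Corresponds (S : Finset ℕ) (k : ℕ) (π π' : Equiv.Perm ℕ) : Prop :=
  IsPermOf (S.erase k) π' ∧
    ∀ i ∈ S.erase k, ∀ j ∈ S.erase k,
      (DirBefore S π i j ∨ (DirBefore S π i k ∧ DirBefore S π k j)) →
      DirBefore (S.erase k) π' i j


namespace RSwap

def cycPred (S : Finset ℕ) (p : ℕ) : ℕ :=
  if h : (S.filter (fun q => q < p)).Nonempty then (S.filter (fun q => q < p)).max' h
  else if h' : S.Nonempty then S.max' h' else 0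

variable {S : Finset ℕ} {π : Equiv.Perm ℕ}

lemma cycSucc_mem (hS : S.Nonempty) (p : ℕ) : cycSucc S p ∈ S := by
  by_cases h : (S.filter (fun q => p < q)).Nonempty
  · rw [cycSucc, dif_pos h]
    exact (Finset.mem_filter.1 ((S.filter _).min'_mem h)).1
  · rw [cycSucc, dif_neg h, dif_pos hS]
    exact S.min'_mem hS

lemma cycPred_cycSucc {p : ℕ} (hp : p ∈ S) : cycPred S (cycSucc S p) = p := by
  have hS : S.Nonempty := ⟨p, hp⟩
  by_cases h : (S.filter (fun q => p < q)).Nonempty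
  · rw [cycSucc, dif_pos h]
    have hsT : (S.filter (fun q => p < q)).min' h ∈ S.filter (fun q => p < q) :=
      Finset.min'_mem _ h
    obtain ⟨hsS, hps⟩ := Finset.mem_filter.1 hsT
    have hU : (S.filter (fun q => q < (S.filter (fun q => p < q)).min' h)).Nonempty :=
      ⟨p, Finset.mem_filter.2 ⟨hp, hps⟩⟩
    rw [cycPred, dif_pos hU]
    apply le_antisymm
    · apply Finset.max'_le
      intro r hr
      obtain ⟨hrS, hrs⟩ := Finset.mem_filter.1 hr
      by_contra hpr
      push_neg at hpr
      exact absurd (Finset.min'_le _ r (Finset.mem_filter.2 ⟨hrS, hpr⟩)) (not_le.2 hrs)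
    · refine Finset.le_max' _ p ?_
      exact Finset.mem_filter.2 ⟨hp, hps⟩
  · rw [cycSucc, dif_neg h, dif_pos hS]
    have hU : ¬ (S.filter (fun q => q < S.min' hS)).Nonempty := by
      rintro ⟨r, hr⟩
      obtain ⟨hrS, hrlt⟩ := Finset.mem_filter.1 hr
      exact absurd (S.min'_le r hrS) (not_le.2 hrlt)
    rw [cycPred, dif_neg hU, dif_pos hS]
    apply le_antisymm
    · by_contra hlt
      push_neg at hlt
      exact h ⟨S.max' hS, Finset.mem_filter.2 ⟨S.max'_mem hS, hlt⟩⟩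
    · exact Finset.le_max' S p hp

lemma cycSucc_injOn {p q : ℕ} (hp : p ∈ S) (hq : q ∈ S)
    (h : cycSucc S p = cycSucc S q) : p = q := by
  have h1 := cycPred_cycSucc hp
  have h2 := cycPred_cycSucc hq
  rw [h, h2] at h1
  exact h1.symm

lemma isPermOf_symm (hπ : IsPermOf S π) : IsPermOf S π.symm := by
  intro x hx
  nth_rewrite 1 [← hπ x hx]
  exact π.symm_apply_apply x

lemma mem_of_perm (hπ : IsPermOf S π) {x : ℕ} (hx : x ∈ S) : π x ∈ S := by
  by_contra h
  have h1 := hπ (π x) h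
  have h2 : π x = x := π.injective h1
  rw [h2] at h
  exact h hx

end RSwap

namespace RSwap

variable {S : Finset ℕ} {π : Equiv.Perm ℕ}

/-- The element directly after `i` in `π`. -/
def nxt (S : Finset ℕ) (π : Equiv.Perm ℕ) (i : ℕ) : ℕ := π.symm (cycSucc S (π i))

lemma nxt_mem (hπ : IsPermOf S π) {i : ℕ} (hi : i ∈ S) : nxt S π i ∈ S :=
  mem_of_perm (isPermOf_symm hπ) (cycSucc_mem ⟨i, hi⟩ _)

lemma nxt_inj (hπ : IsPermOf S π) {x y : ℕ} (hx : x ∈ S) (hy : y ∈ S)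
    (h : nxt S π x = nxt S π y) : x = y := by
  have h2 : cycSucc S (π x) = cycSucc S (π y) := π.symm.injective h
  exact π.injective (cycSucc_injOn (mem_of_perm hπ hx) (mem_of_perm hπ hy) h2)

lemma dirBefore_iff (hπ : IsPermOf S π) {i j : ℕ} (hi : i ∈ S) (hj : j ∈ S) :
    DirBefore S π i j ↔ π j = cycSucc S (π i) := by
  have hpi : π i ∈ S := mem_of_perm hπ hi
  have hpj : π j ∈ S := mem_of_perm hπ hj
  have hS : S.Nonempty := ⟨i, hi⟩
  constructor
  · rintro (⟨hlt, hmid⟩ | ⟨hmax, hmin⟩)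
    · have hT : (S.filter (fun q => π i < q)).Nonempty :=
        ⟨π j, Finset.mem_filter.2 ⟨hpj, hlt⟩⟩
      rw [cycSucc, dif_pos hT]
      have h1 : π j ≤ (S.filter (fun q => π i < q)).min' hT := by
        apply Finset.le_min'
        intro y hy
        obtain ⟨hyS, hylt⟩ := Finset.mem_filter.1 hy
        by_contra hc
        push_neg at hc
        have hℓ : π.symm y ∈ S := mem_of_perm (isPermOf_symm hπ) hyS
        have := hmid (π.symm y) hℓ
        rw [π.apply_symm_apply] at this
        exact this ⟨hylt, hc⟩
      have h2 : (S.filter (fun q => π i < q)).min' hT ≤ π j :=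
        Finset.min'_le _ _ (Finset.mem_filter.2 ⟨hpj, hlt⟩)
      exact le_antisymm h1 h2
    · have hT : ¬ (S.filter (fun q => π i < q)).Nonempty := by
        rintro ⟨r, hr⟩
        obtain ⟨hrS, hrlt⟩ := Finset.mem_filter.1 hr
        have : (r : WithBot ℕ) ≤ S.max := Finset.le_max hrS
        rw [hmax] at this
        exact absurd (by exact_mod_cast this) (not_le.2 hrlt)
      rw [cycSucc, dif_neg hT, dif_pos hS]
      have := Finset.coe_min' hS
      rw [hmin] at this
      exact WithTop.coe_inj.mp this.symm
  · intro h
    by_cases hT : (S.filter (fun q => π i < q)).Nonempty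
    · rw [cycSucc, dif_pos hT] at h
      left
      have hjT : π j ∈ S.filter (fun q => π i < q) := h ▸ Finset.min'_mem _ hT
      refine ⟨(Finset.mem_filter.1 hjT).2, ?_⟩
      intro ℓ hℓ ⟨h1, h2⟩
      have : (S.filter (fun q => π i < q)).min' hT ≤ π ℓ :=
        Finset.min'_le _ _ (Finset.mem_filter.2 ⟨mem_of_perm hπ hℓ, h1⟩)
      rw [← h] at this
      exact absurd this (not_le.2 h2)
    · rw [cycSucc, dif_neg hT, dif_pos hS] at h
      right
      constructor
      · have hmax : S.max' hS = π i := by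
          apply le_antisymm
          · by_contra hc
            push_neg at hc
            exact hT ⟨S.max' hS, Finset.mem_filter.2 ⟨S.max'_mem hS, hc⟩⟩
          · exact Finset.le_max' S _ hpi
        rw [← Finset.coe_max' hS, hmax]
        rfl
      · rw [← Finset.coe_min' hS, h]
        rfl

lemma dirBefore_iff_nxt (hπ : IsPermOf S π) {i j : ℕ} (hi : i ∈ S) (hj : j ∈ S) :
    DirBefore S π i j ↔ nxt S π i = j := by
  rw [dirBefore_iff hπ hi hj, nxt, Equiv.symm_apply_eq, eq_comm]

lemma isCycSwap_iff (hπ : IsPermOf S π) {a b : ℕ} :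
    IsCycSwap S π (a, b) ↔ a ∈ S ∧ b ∈ S ∧ nxt S π a = b := by
  unfold IsCycSwap nxt
  rw [Equiv.symm_apply_eq, eq_comm]

lemma swap_perm_apply (π : Equiv.Perm ℕ) (a b x : ℕ) :
    Equiv.swap (π a) (π b) (π x) = π (Equiv.swap a b x) := by
  rw [Equiv.swap_apply_apply]
  simp [Equiv.Perm.mul_apply]

lemma swap_perm_symm_apply (π : Equiv.Perm ℕ) (a b y : ℕ) :
    π.symm (Equiv.swap (π a) (π b) y) = Equiv.swap a b (π.symm y) := by
  rw [Equiv.swap_apply_apply]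
  simp [Equiv.Perm.mul_apply, Equiv.Perm.inv_def]

lemma nxt_applySwap (π : Equiv.Perm ℕ) (a b i : ℕ) :
    nxt S (applySwap π (a, b)) i = Equiv.swap a b (nxt S π (Equiv.swap a b i)) := by
  unfold nxt applySwap
  simp only [Equiv.trans_apply, Equiv.symm_trans_apply, Equiv.symm_swap]
  rw [swap_perm_symm_apply, swap_perm_apply]

lemma isPermOf_applySwap (hπ : IsPermOf S π) {a b : ℕ} (ha : a ∈ S) (hb : b ∈ S) :
    IsPermOf S (applySwap π (a, b)) := by
  intro x hx
  simp only [applySwap, Equiv.trans_apply]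
  rw [hπ x hx]
  exact Equiv.swap_apply_of_ne_of_ne (fun h => hx (h ▸ mem_of_perm hπ ha))
    (fun h => hx (h ▸ mem_of_perm hπ hb))

/-- The derived successor map on `S \ {k}`. -/
def dnxt (S : Finset ℕ) (k : ℕ) (π : Equiv.Perm ℕ) (i : ℕ) : ℕ :=
  if nxt S π i = k then nxt S π k else nxt S π i

lemma dnxt_mem (hπ : IsPermOf S π) {k : ℕ} (hk : k ∈ S) {i : ℕ} (hi : i ∈ S.erase k) :
    dnxt S k π i ∈ S.erase k := by
  obtain ⟨hik, hiS⟩ := Finset.mem_erase.1 hi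
  unfold dnxt
  by_cases h : nxt S π i = k
  · rw [if_pos h]
    refine Finset.mem_erase.2 ⟨fun hc => ?_, nxt_mem hπ hk⟩
    exact hik (nxt_inj hπ hiS hk (h.trans hc.symm))
  · rw [if_neg h]
    exact Finset.mem_erase.2 ⟨h, nxt_mem hπ hiS⟩

lemma dnxt_applySwap_keep (π : Equiv.Perm ℕ) {a b k : ℕ} (ha : a ≠ k) (hb : b ≠ k) (i : ℕ) :
    dnxt S k (applySwap π (a, b)) i = Equiv.swap a b (dnxt S k π (Equiv.swap a b i)) := by
  have hswk : Equiv.swap a b k = k := Equiv.swap_apply_of_ne_of_ne (Ne.symm ha) (Ne.symm hb)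
  unfold dnxt
  rw [nxt_applySwap, nxt_applySwap, hswk, apply_ite (Equiv.swap a b)]
  by_cases h : nxt S π (Equiv.swap a b i) = k
  · rw [if_pos (by rw [h, hswk]), if_pos h]
  · rw [if_neg (fun hc => h ((Equiv.swap a b).injective (hc.trans hswk.symm))), if_neg h]

lemma dnxt_applySwap_drop (hπ : IsPermOf S π) {k a b : ℕ} (hk : k ∈ S) (ha : a ∈ S)
    (hb : b ∈ S) (hadj : nxt S π a = b) (hor : a = k ∨ b = k) {i : ℕ} (hiS : i ∈ S)
    (hik : i ≠ k) : dnxt S k (applySwap π (a, b)) i = dnxt S k π i := by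
  rcases eq_or_ne a b with rfl | hab
  · unfold dnxt
    rw [nxt_applySwap, nxt_applySwap, Equiv.swap_self]
    simp
    split_ifs <;> simp_all
  rcases hor with rfl | rfl
  · -- k := a : the swap is (a, b) with nxt a = b; here hik : i ≠ a
    unfold dnxt
    rw [nxt_applySwap, nxt_applySwap, Equiv.swap_apply_left, hadj]
    rcases eq_or_ne i b with rfl | hib
    · rw [Equiv.swap_apply_right, hadj, Equiv.swap_apply_right, if_pos rfl]
      by_cases hnb : nxt S π i = a
      · rw [hnb, Equiv.swap_apply_left, if_pos rfl]
      · have hnbb : nxt S π i ≠ i := fun hc => hab (nxt_inj hπ ha hb (hadj.trans hc.symm))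
        rw [Equiv.swap_apply_of_ne_of_ne hnb hnbb, if_neg hnb]
    · rw [Equiv.swap_apply_of_ne_of_ne hik hib]
      have hnib : nxt S π i ≠ b := fun hc => hik (nxt_inj hπ hiS ha (hc.trans hadj.symm))
      by_cases hnia : nxt S π i = a
      · rw [hnia, Equiv.swap_apply_left, if_neg (Ne.symm hab), if_pos rfl]
      · rw [Equiv.swap_apply_of_ne_of_ne hnia hnib, if_neg hnia, if_neg hnia]
  · -- k := b : the swap is (a, b) with nxt a = b; here hik : i ≠ b
    unfold dnxt
    rw [nxt_applySwap, nxt_applySwap, Equiv.swap_apply_right, hadj,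
      Equiv.swap_apply_right]
    rcases eq_or_ne i a with rfl | hia
    · rw [Equiv.swap_apply_left, if_pos hadj]
      by_cases hc : nxt S π b = i
      · rw [hc, Equiv.swap_apply_left, if_pos rfl]
      · have hcb : nxt S π b ≠ b := fun h => hab (nxt_inj hπ ha hb (hadj.trans h.symm))
        rw [Equiv.swap_apply_of_ne_of_ne hc hcb, if_neg hcb]
    · rw [Equiv.swap_apply_of_ne_of_ne hia hik]
      have hnib : nxt S π i ≠ b := fun hc => hia (nxt_inj hπ hiS ha (hc.trans hadj.symm))
      by_cases hnia : nxt S π i = a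
      · rw [hnia, Equiv.swap_apply_left, if_pos rfl, if_neg hab]
      · rw [Equiv.swap_apply_of_ne_of_ne hnia hnib, if_neg hnib, if_neg hnib]

lemma corresponds_iff (hπ : IsPermOf S π) {k : ℕ} (hk : k ∈ S) (π' : Equiv.Perm ℕ) :
    Corresponds S k π π' ↔
      (IsPermOf (S.erase k) π' ∧
        ∀ i ∈ S.erase k, nxt (S.erase k) π' i = dnxt S k π i) := by
  constructor
  · rintro ⟨h1, h2⟩
    refine ⟨h1, fun i hi => ?_⟩
    have hiS : i ∈ S := Finset.mem_of_mem_erase hi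
    have hdm := dnxt_mem hπ hk hi
    have hD : DirBefore S π i (dnxt S k π i) ∨
        (DirBefore S π i k ∧ DirBefore S π k (dnxt S k π i)) := by
      by_cases h : nxt S π i = k
      · exact Or.inr ⟨(dirBefore_iff_nxt hπ hiS hk).2 h,
          (dirBefore_iff_nxt hπ hk (Finset.mem_of_mem_erase hdm)).2
            (by rw [dnxt, if_pos h])⟩
      · exact Or.inl ((dirBefore_iff_nxt hπ hiS (Finset.mem_of_mem_erase hdm)).2
          (by rw [dnxt, if_neg h]))
    exact (dirBefore_iff_nxt h1 hi hdm).1 (h2 i hi _ hdm hD)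
  · rintro ⟨h1, h2⟩
    refine ⟨h1, fun i hi j hj hD => ?_⟩
    have hiS : i ∈ S := Finset.mem_of_mem_erase hi
    have hjS : j ∈ S := Finset.mem_of_mem_erase hj
    have hdj : dnxt S k π i = j := by
      rcases hD with h | ⟨hik', hkj⟩
      · have hh := (dirBefore_iff_nxt hπ hiS hjS).1 h
        rw [dnxt, if_neg (by rw [hh]; exact (Finset.mem_erase.1 hj).1), hh]
      · have e1 := (dirBefore_iff_nxt hπ hiS hk).1 hik'
        have e2 := (dirBefore_iff_nxt hπ hk hjS).1 hkj
        rw [dnxt, if_pos e1, e2]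
    rw [dirBefore_iff_nxt h1 hi hj, h2 i hi, hdj]

lemma main_aux (S : Finset ℕ) (k : ℕ) (hk : k ∈ S) :
    ∀ (Q : List (ℕ × ℕ)) (π π' : Equiv.Perm ℕ), IsPermOf S π → IsSwapSeq S π Q →
      IsPermOf (S.erase k) π' →
      (∀ i ∈ S.erase k, nxt (S.erase k) π' i = dnxt S k π i) →
      IsSwapSeq (S.erase k) π' (Q.filter fun q => decide (q.1 ≠ k ∧ q.2 ≠ k)) ∧
      IsPermOf S (applySwaps π Q) ∧
      IsPermOf (S.erase k)
        (applySwaps π' (Q.filter fun q => decide (q.1 ≠ k ∧ q.2 ≠ k))) ∧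
      (∀ i ∈ S.erase k,
        nxt (S.erase k) (applySwaps π' (Q.filter fun q => decide (q.1 ≠ k ∧ q.2 ≠ k))) i
          = dnxt S k (applySwaps π Q) i) := by
  intro Q
  induction Q with
  | nil => exact fun π π' hπ _ hπ' hcorr => ⟨trivial, hπ, hπ', hcorr⟩
  | cons q Q ih =>
    intro π π' hπ hseq hπ' hcorr
    obtain ⟨hcyc, hrest⟩ := hseq
    obtain ⟨a, b⟩ := q
    obtain ⟨haS, hbS, hadj0⟩ := hcyc
    have hadj : nxt S π a = b := by
      rw [nxt, Equiv.symm_apply_eq]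
      exact hadj0.symm
    by_cases hq : a ≠ k ∧ b ≠ k
    · have hfil : List.filter (fun q => decide (q.1 ≠ k ∧ q.2 ≠ k)) ((a, b) :: Q)
          = (a, b) :: List.filter (fun q => decide (q.1 ≠ k ∧ q.2 ≠ k)) Q := by
        simp [List.filter_cons, hq.1, hq.2]
      have haS' : a ∈ S.erase k := Finset.mem_erase.2 ⟨hq.1, haS⟩
      have hbS' : b ∈ S.erase k := Finset.mem_erase.2 ⟨hq.2, hbS⟩
      have hadj' : nxt (S.erase k) π' a = b := by
        rw [hcorr a haS', dnxt, if_neg (by rw [hadj]; exact hq.2), hadj]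
      have hcyc' : IsCycSwap (S.erase k) π' (a, b) :=
        (isCycSwap_iff hπ').2 ⟨haS', hbS', hadj'⟩
      have hπ2 : IsPermOf S (applySwap π (a, b)) := isPermOf_applySwap hπ haS hbS
      have hπ'2 : IsPermOf (S.erase k) (applySwap π' (a, b)) :=
        isPermOf_applySwap hπ' haS' hbS'
      have hcorr2 : ∀ i ∈ S.erase k, nxt (S.erase k) (applySwap π' (a, b)) i
          = dnxt S k (applySwap π (a, b)) i := by
        intro i hi
        rw [nxt_applySwap, dnxt_applySwap_keep π hq.1 hq.2]
        congr 1
        apply hcorr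
        rcases eq_or_ne i a with rfl | hia
        · rw [Equiv.swap_apply_left]; exact hbS'
        rcases eq_or_ne i b with rfl | hib
        · rw [Equiv.swap_apply_right]; exact haS'
        · rw [Equiv.swap_apply_of_ne_of_ne hia hib]; exact hi
      obtain ⟨s1, s2, s3, s4⟩ :=
        ih (applySwap π (a, b)) (applySwap π' (a, b)) hπ2 hrest hπ'2 hcorr2
      rw [hfil]
      exact ⟨⟨hcyc', s1⟩, s2, s3, s4⟩
    · have hork : a = k ∨ b = k := by
        by_contra hc
        push_neg at hc
        exact hq ⟨hc.1, hc.2⟩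
      have hfil : List.filter (fun q => decide (q.1 ≠ k ∧ q.2 ≠ k)) ((a, b) :: Q)
          = List.filter (fun q => decide (q.1 ≠ k ∧ q.2 ≠ k)) Q := by
        simp only [List.filter_cons]
        rw [if_neg (by simpa using hq)]
      have hπ2 : IsPermOf S (applySwap π (a, b)) := isPermOf_applySwap hπ haS hbS
      have hcorr2 : ∀ i ∈ S.erase k,
          nxt (S.erase k) π' i = dnxt S k (applySwap π (a, b)) i := by
        intro i hi
        obtain ⟨hik, hiS⟩ := Finset.mem_erase.1 hi
        rw [dnxt_applySwap_drop hπ hk haS hbS hadj hork hiS hik]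
        exact hcorr i hi
      obtain ⟨s1, s2, s3, s4⟩ := ih (applySwap π (a, b)) π' hπ2 hrest hπ' hcorr2
      rw [hfil]
      exact ⟨s1, s2, s3, s4⟩

end RSwap


/-- Deleting from a sequence of cyclically adjacent swaps all swaps involving a fixed
element `k` gives a valid sequence of cyclically adjacent swaps for any permutation
`π'` corresponding to `π` restricted to `S \ {k}`, and performing it on `π'` results
in a permutation corresponding to the final permutation `σ` restricted to `S \ {k}`. -/
theorem restrict_swap_seq (S : Finset ℕ) (hpos : ∀ x ∈ S, 0 < x)
    (π : Equiv.Perm ℕ) (hπ : IsPermOf S π)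
    (Q : List (ℕ × ℕ)) (hQ : IsSwapSeq S π Q)
    (σ : Equiv.Perm ℕ) (hσ : applySwaps π Q = σ)
    (k : ℕ) (hk : k ∈ S)
    (π' : Equiv.Perm ℕ) (hπ' : Corresponds S k π π') :
    IsSwapSeq (S.erase k) π' (Q.filter fun q => decide (q.1 ≠ k ∧ q.2 ≠ k)) ∧
      Corresponds S k σ
        (applySwaps π' (Q.filter fun q => decide (q.1 ≠ k ∧ q.2 ≠ k))) := by
  subst hσ
  rw [RSwap.corresponds_iff hπ hk] at hπ'
  obtain ⟨h1, h2⟩ := hπ'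
  obtain ⟨s1, s2, s3, s4⟩ := RSwap.main_aux S k hk Q π π' hπ hQ h1 h2
  refine ⟨s1, ?_⟩
  rw [RSwap.corresponds_iff s2 hk]
  exact ⟨s3, s4⟩
end

section
/- Let Q be a finite sequence of cyclically adjacent swaps for a permutation π of a set S of n elements whose net clockwise displacement vector d satisfies d(i) − d(j) ≤ n for all i, j ∈ S. Let k ∈ S satisfy d(k) = max_i d(i) or d(k) = min_i d(i), and define d'(i) = d(i) − c(i,k) for i ∈ S ∖ {k}. Then d'(i) − d'(j) ≤ n − 1 for all i, j ∈ S ∖ {k}. -/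
-- ceiling division helpers
private def cdiv (a n : ℤ) : ℤ := -(-a / n)

private lemma cdiv_add_mul (a w : ℤ) {n : ℤ} (hn : n ≠ 0) :
    cdiv (a + w * n) n = cdiv a n + w := by
  unfold cdiv
  have h : -(a + w * n) = -a + -w * n := by ring
  rw [h, Int.add_mul_ediv_right _ _ hn]
  ring

private lemma cdiv_zero_of {a n : ℤ} (hn : 0 < n) (h1 : -n < a) (h2 : a ≤ 0) :
    cdiv a n = 0 := by
  unfold cdiv
  rw [Int.ediv_eq_zero_of_lt (by omega) (by omega)]
  simp

private lemma cdiv_one_of {a n : ℤ} (hn : 0 < n) (h1 : 0 < a) (h2 : a ≤ n) :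
    cdiv a n = 1 := by
  have h := cdiv_add_mul (a - n) 1 (show n ≠ 0 by omega)
  have h2' : a - n + 1 * n = a := by ring
  rw [h2'] at h
  rw [h, cdiv_zero_of hn (by omega) (by omega)]
  linarith

private lemma cdiv_mono {a b n : ℤ} (hn : 0 < n) (h : a ≤ b) : cdiv a n ≤ cdiv b n := by
  unfold cdiv
  have := Int.ediv_le_ediv hn (show -b ≤ -a by omega)
  linarith

private lemma cdiv_le_of_le {a b n : ℤ} (hn : 0 < n) (h : a ≤ b) :
    cdiv b n ≤ cdiv a n + (b - a) := by
  have h1 : b ≤ a + (b - a) * n := by nlinarith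
  have h2 := cdiv_mono hn h1
  rwa [cdiv_add_mul a (b - a) (by omega)] at h2

-- rank of a position among S
private def prk (S : Finset ℕ) (p : ℕ) : ℤ := ((S.filter (fun s => s < p)).card : ℤ)

private lemma prk_nonneg (S : Finset ℕ) (p : ℕ) : 0 ≤ prk S p := Int.natCast_nonneg _

private lemma prk_lt_prk {S : Finset ℕ} {p q : ℕ} (hp : p ∈ S) (h : p < q) :
    prk S p < prk S q := by
  unfold prk
  have hss : S.filter (fun s => s < p) ⊂ S.filter (fun s => s < q) := by
    constructor
    · intro x hx
      simp only [Finset.mem_filter] at hx ⊢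
      exact ⟨hx.1, lt_trans hx.2 h⟩
    · intro hsub
      have hmem : p ∈ S.filter (fun s => s < q) := by simp [hp, h]
      have := hsub hmem
      simp at this
  exact_mod_cast Finset.card_lt_card hss

private lemma prk_le {S : Finset ℕ} {p : ℕ} (hp : p ∈ S) : prk S p ≤ (S.card : ℤ) - 1 := by
  unfold prk
  have hss : S.filter (fun s => s < p) ⊆ S.erase p := by
    intro x hx
    simp only [Finset.mem_filter] at hx
    exact Finset.mem_erase.mpr ⟨by omega, hx.1⟩
  have h2 := Finset.card_le_card hss
  have h3 := Finset.card_erase_of_mem hp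
  have h4 : 1 ≤ S.card := Finset.card_pos.mpr ⟨p, hp⟩
  omega

private lemma prk_ne {S : Finset ℕ} {p q : ℕ} (hp : p ∈ S) (hq : q ∈ S) (h : p ≠ q) :
    prk S p ≠ prk S q := by
  rcases lt_or_gt_of_ne h with h' | h'
  · exact ne_of_lt (prk_lt_prk hp h')
  · exact (ne_of_lt (prk_lt_prk hq h')).symm

private lemma prk_max {S : Finset ℕ} (h : S.Nonempty) :
    prk S (S.max' h) = (S.card : ℤ) - 1 := by
  unfold prk
  have he : S.filter (fun s => s < S.max' h) = S.erase (S.max' h) := by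
    ext x
    simp only [Finset.mem_filter, Finset.mem_erase]
    constructor
    · rintro ⟨hx, hlt⟩; exact ⟨by omega, hx⟩
    · rintro ⟨hne, hx⟩
      exact ⟨hx, lt_of_le_of_ne (S.le_max' x hx) hne⟩
  rw [he, Finset.card_erase_of_mem (S.max'_mem h)]
  have h4 : 1 ≤ S.card := Finset.card_pos.mpr h
  omega

private lemma prk_min {S : Finset ℕ} (h : S.Nonempty) : prk S (S.min' h) = 0 := by
  unfold prk
  have he : S.filter (fun s => s < S.min' h) = ∅ := by
    apply Finset.filter_eq_empty_iff.mpr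
    intro x hx
    have := S.min'_le x hx
    linarith
  rw [he]
  simp

private lemma cycSucc_of_max {S : Finset ℕ} (h : S.Nonempty) :
    cycSucc S (S.max' h) = S.min' h := by
  unfold cycSucc
  have he : ¬(S.filter (fun q => S.max' h < q)).Nonempty := by
    rw [Finset.not_nonempty_iff_eq_empty]
    apply Finset.filter_eq_empty_iff.mpr
    intro x hx
    have := S.le_max' x hx
    linarith
  rw [dif_neg he, dif_pos h]

private lemma cycSucc_spec {S : Finset ℕ} {p : ℕ} (hp : p ∈ S) (h : S.Nonempty)
    (hne : p ≠ S.max' h) :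
    cycSucc S p ∈ S ∧ prk S (cycSucc S p) = prk S p + 1 := by
  have hlt : p < S.max' h := lt_of_le_of_ne (S.le_max' p hp) hne
  have hfil : (S.filter (fun q => p < q)).Nonempty :=
    ⟨S.max' h, by simp [S.max'_mem h, hlt]⟩
  unfold cycSucc
  rw [dif_pos hfil]
  have hm0 := Finset.min'_mem _ hfil
  simp only [Finset.mem_filter] at hm0
  obtain ⟨hmS, hpm⟩ := hm0
  refine ⟨hmS, ?_⟩
  unfold prk
  have he : S.filter (fun s => s < (S.filter (fun q => p < q)).min' hfil)
      = insert p (S.filter (fun s => s < p)) := by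
    ext x
    simp only [Finset.mem_filter, Finset.mem_insert]
    constructor
    · rintro ⟨hxS, hxm⟩
      by_cases hxp : x < p
      · exact Or.inr ⟨hxS, hxp⟩
      · left
        by_contra hxp'
        have hpx : p < x := by omega
        have hxf : x ∈ S.filter (fun q => p < q) := by simp [hxS, hpx]
        have := Finset.min'_le _ x hxf
        linarith
    · rintro (rfl | ⟨hxS, hxp⟩)
      · exact ⟨hp, hpm⟩
      · exact ⟨hxS, by omega⟩
  rw [he, Finset.card_insert_of_notMem (by simp)]
  push_cast
  ring

private lemma cycSucc_mem {S : Finset ℕ} {p : ℕ} (hp : p ∈ S) (h : S.Nonempty) :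
    cycSucc S p ∈ S := by
  by_cases hne : p = S.max' h
  · rw [hne, cycSucc_of_max h]; exact S.min'_mem h
  · exact (cycSucc_spec hp h hne).1

private lemma cycSucc_ne {S : Finset ℕ} {p : ℕ} (h2 : 1 < S.card) (hp : p ∈ S) :
    cycSucc S p ≠ p := by
  have h : S.Nonempty := ⟨p, hp⟩
  by_cases hne : p = S.max' h
  · rw [hne, cycSucc_of_max h]
    have := Finset.min'_lt_max'_of_card S h2
    linarith
  · have := (cycSucc_spec hp h hne).2
    intro hcontra
    rw [hcontra] at this
    linarith

private lemma applySwap_apply (π : Equiv.Perm ℕ) (u v x : ℕ) :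
    applySwap π (u, v) x = if x = u then π v else if x = v then π u else π x := by
  simp only [applySwap, Equiv.trans_apply]
  by_cases hxu : x = u
  · subst hxu; simp [Equiv.swap_apply_left]
  · by_cases hxv : x = v
    · subst hxv; simp [Equiv.swap_apply_right, hxu]
    · rw [Equiv.swap_apply_of_ne_of_ne (fun hh => hxu (π.injective hh))
        (fun hh => hxv (π.injective hh))]
      simp [hxu, hxv]

private lemma mem_of_perm {S : Finset ℕ} {π : Equiv.Perm ℕ} (hπ : IsPermOf S π) {x : ℕ}
    (hx : x ∈ S) : π x ∈ S := by
  by_contra h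
  have h1 : π (π x) = π x := hπ _ h
  have h2 : π x = x := π.injective h1
  rw [h2] at h
  exact h hx

private lemma isPermOf_applySwap {S : Finset ℕ} {π : Equiv.Perm ℕ} (hπ : IsPermOf S π)
    {u v : ℕ} (hu : u ∈ S) (hv : v ∈ S) : IsPermOf S (applySwap π (u, v)) := by
  intro x hx
  rw [applySwap_apply]
  have hxu : x ≠ u := fun h => hx (h ▸ hu)
  have hxv : x ≠ v := fun h => hx (h ▸ hv)
  simp [hxu, hxv, hπ x hx]

private lemma netDisp_cons {S : Finset ℕ} {u v : ℕ} (hu : u ∈ S) (hv : v ∈ S) (huv : u ≠ v)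
    (Q : List (ℕ × ℕ)) {i : ℕ} (hi : i ∈ S) :
    netDisp S ((u, v) :: Q) i =
      netDisp S Q i + ((if u = i then 1 else 0) - (if v = i then 1 else 0) : ℤ) := by
  unfold netDisp swapCount
  have hstep : ∀ j, ((List.count (i,j) ((u,v)::Q) : ℤ) - (List.count (j,i) ((u,v)::Q) : ℤ))
      = ((List.count (i,j) Q : ℤ) - (List.count (j,i) Q : ℤ))
        + ((if (u,v) = (i,j) then (1:ℤ) else 0) - (if (u,v) = (j,i) then (1:ℤ) else 0)) := by
    intro j
    rw [List.count_cons, List.count_cons]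
    simp only [beq_iff_eq]
    by_cases hA : ((u,v) = (i,j)) <;> by_cases hB : ((u,v) = (j,i))
    · exfalso
      simp only [Prod.ext_iff] at hA hB
      omega
    all_goals simp [hA, hB] <;> push_cast <;> ring
  rw [Finset.sum_congr rfl (fun j _ => hstep j), Finset.sum_add_distrib]
  congr 1
  rw [Finset.sum_sub_distrib]
  have h1 : ∑ j ∈ S.erase i, (if (u,v) = (i,j) then (1:ℤ) else 0) = if u = i then 1 else 0 := by
    by_cases hiu : i = u
    · subst hiu
      rw [if_pos rfl]
      rw [Finset.sum_eq_single v]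
      · simp
      · intro j _ hjv
        rw [if_neg]
        simp only [Prod.ext_iff, not_and]
        intro _ h2
        exact hjv h2.symm
      · intro hv'
        exact absurd (Finset.mem_erase.mpr ⟨Ne.symm huv, hv⟩) hv'
    · rw [if_neg (fun h => hiu h.symm)]
      apply Finset.sum_eq_zero
      intro j _
      rw [if_neg]
      simp only [Prod.ext_iff, not_and]
      intro h1 _
      exact hiu h1.symm
  have h2 : ∑ j ∈ S.erase i, (if (u,v) = (j,i) then (1:ℤ) else 0) = if v = i then 1 else 0 := by
    by_cases hiv : i = v
    · subst hiv
      rw [if_pos rfl]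
      rw [Finset.sum_eq_single u]
      · simp
      · intro j _ hju
        rw [if_neg]
        simp only [Prod.ext_iff, not_and]
        intro h1 _
        exact hju h1.symm
      · intro hu'
        exact absurd (Finset.mem_erase.mpr ⟨huv, hu⟩) hu'
    · rw [if_neg (fun h => hiv h.symm)]
      apply Finset.sum_eq_zero
      intro j _
      rw [if_neg]
      simp only [Prod.ext_iff, not_and]
      intro _ h2
      exact hiv h2.symm
  rw [h1, h2]

private lemma main_lemma (S : Finset ℕ) (Q : List (ℕ × ℕ)) :
    ∀ (π : Equiv.Perm ℕ), IsPermOf S π → IsSwapSeq S π Q →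
    ∀ i ∈ S, ∀ k ∈ S, i ≠ k →
    swapCount Q i k =
      cdiv (prk S (π i) - prk S (π k) + (netDisp S Q i - netDisp S Q k)) (S.card : ℤ)
        - cdiv (prk S (π i) - prk S (π k)) (S.card : ℤ) := by
  induction Q with
  | nil =>
    intro π hπ _ i hi k hk hik
    simp [swapCount, netDisp]
  | cons q Q ih =>
    intro π hπ hQ i hi k hk hik
    obtain ⟨u, v⟩ := q
    obtain ⟨⟨hu, hv, hsucc⟩, hQ'⟩ := hQ
    replace hu : u ∈ S := hu
    replace hv : v ∈ S := hv
    replace hsucc : π v = cycSucc S (π u) := hsucc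
    have hScard : 1 < S.card := Finset.one_lt_card.mpr ⟨i, hi, k, hk, hik⟩
    have hS : S.Nonempty := ⟨i, hi⟩
    have hN0 : (0:ℤ) < (S.card : ℤ) := by exact_mod_cast Nat.lt_of_lt_of_le Nat.zero_lt_one hScard.le
    have hNne : ((S.card : ℤ)) ≠ 0 := ne_of_gt hN0
    have hN2 : (2:ℤ) ≤ (S.card : ℤ) := by exact_mod_cast hScard
    have hπu : π u ∈ S := mem_of_perm hπ hu
    have hπv : π v ∈ S := mem_of_perm hπ hv
    have hπi : π i ∈ S := mem_of_perm hπ hi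
    have hπk : π k ∈ S := mem_of_perm hπ hk
    have huv : u ≠ v := by
      intro h
      subst h
      exact cycSucc_ne hScard hπu hsucc.symm
    have hπuv : π u ≠ π v := fun h => huv (π.injective h)
    have hπ2 := isPermOf_applySwap hπ hu hv
    have IH := ih (applySwap π (u, v)) hπ2 hQ' i hi k hk hik
    have hndi := netDisp_cons hu hv huv Q hi
    have hndk := netDisp_cons hu hv huv Q hk
    have hsc : swapCount ((u,v)::Q) i k = swapCount Q i k
        + ((if (u,v) = (i,k) then (1:ℤ) else 0) - (if (u,v) = (k,i) then (1:ℤ) else 0)) := by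
      unfold swapCount
      rw [List.count_cons, List.count_cons]
      simp only [beq_iff_eq]
      by_cases hA : ((u,v) = (i,k)) <;> by_cases hB : ((u,v) = (k,i))
      · exfalso; simp only [Prod.ext_iff] at hA hB; omega
      all_goals simp [hA, hB, eq_comm] <;> push_cast <;> ring
    have hπ'u : applySwap π (u,v) u = π v := by
      rw [applySwap_apply]; simp
    have hπ'v : applySwap π (u,v) v = π u := by
      rw [applySwap_apply, if_neg (fun h => huv h.symm), if_pos rfl]
    have hwrap : (prk S (π v) = prk S (π u) + 1) ∨
        (prk S (π u) = (S.card:ℤ) - 1 ∧ prk S (π v) = 0) := by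
      by_cases hmax : π u = S.max' hS
      · right
        refine ⟨by rw [hmax]; exact prk_max hS, ?_⟩
        rw [hsucc, hmax, cycSucc_of_max hS]
        exact prk_min hS
      · left
        have h := (cycSucc_spec hπu hS hmax).2
        rw [hsucc]
        exact h
    have bu1 := prk_nonneg S (π u); have bu2 := prk_le hπu
    have bv1 := prk_nonneg S (π v); have bv2 := prk_le hπv
    have bi1 := prk_nonneg S (π i); have bi2 := prk_le hπi
    have bk1 := prk_nonneg S (π k); have bk2 := prk_le hπk
    have hruv : prk S (π u) ≠ prk S (π v) := prk_ne hπu hπv hπuv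
    by_cases hui : u = i
    · subst hui
      by_cases hvk : v = k
      · -- Case A1 : q = (i,k)
        subst hvk
        rw [hπ'u, hπ'v] at IH
        rw [if_pos rfl, if_neg (fun h => huv h.symm)] at hndi
        rw [if_neg huv, if_pos rfl] at hndk
        rw [if_pos rfl, if_neg (fun h => huv (congrArg Prod.fst h))] at hsc
        rcases hwrap with hnw | hw
        · have harg : prk S (π v) - prk S (π u) + (netDisp S Q u - netDisp S Q v)
              = prk S (π u) - prk S (π v)
                + (netDisp S ((u,v)::Q) u - netDisp S ((u,v)::Q) v) + 0 * (S.card:ℤ) := by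
            omega
          rw [harg, cdiv_add_mul _ 0 hNne] at IH
          have h1 : cdiv (prk S (π v) - prk S (π u)) (S.card:ℤ) = 1 :=
            cdiv_one_of hN0 (by omega) (by omega)
          have h2 : cdiv (prk S (π u) - prk S (π v)) (S.card:ℤ) = 0 :=
            cdiv_zero_of hN0 (by omega) (by omega)
          linarith
        · have harg : prk S (π v) - prk S (π u) + (netDisp S Q u - netDisp S Q v)
              = prk S (π u) - prk S (π v)
                + (netDisp S ((u,v)::Q) u - netDisp S ((u,v)::Q) v) + (-2) * (S.card:ℤ) := by
            omega
          rw [harg, cdiv_add_mul _ (-2) hNne] at IH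
          have h1 : cdiv (prk S (π v) - prk S (π u)) (S.card:ℤ) = 0 :=
            cdiv_zero_of hN0 (by omega) (by omega)
          have h2 : cdiv (prk S (π u) - prk S (π v)) (S.card:ℤ) = 1 :=
            cdiv_one_of hN0 (by omega) (by omega)
          linarith
      · -- Case A2 : q = (i, v), v ∉ {i,k}
        have hkv : k ≠ v := fun h => hvk h.symm
        have hku : k ≠ u := Ne.symm hik
        have hπ'k : applySwap π (u,v) k = π k := by
          rw [applySwap_apply, if_neg hku, if_neg hkv]
        rw [hπ'u, hπ'k] at IH
        rw [if_pos rfl, if_neg (fun h => huv h.symm)] at hndi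
        rw [if_neg hik, if_neg hvk] at hndk
        rw [if_neg (fun h => hvk (congrArg Prod.snd h)),
            if_neg (fun h => hik (congrArg Prod.fst h))] at hsc
        have hruk : prk S (π u) ≠ prk S (π k) :=
          prk_ne hπu hπk (fun h => hik (π.injective h))
        have hrvk : prk S (π v) ≠ prk S (π k) :=
          prk_ne hπv hπk (fun h => hvk (π.injective h))
        rcases hwrap with hnw | hw
        · have harg : prk S (π v) - prk S (π k) + (netDisp S Q u - netDisp S Q k)
              = prk S (π u) - prk S (π k)
                + (netDisp S ((u,v)::Q) u - netDisp S ((u,v)::Q) k) + 0 * (S.card:ℤ) := by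
            omega
          rw [harg, cdiv_add_mul _ 0 hNne] at IH
          have hcd : cdiv (prk S (π v) - prk S (π k)) (S.card:ℤ)
              = cdiv (prk S (π u) - prk S (π k)) (S.card:ℤ) := by
            rcases lt_or_gt_of_ne hruk with hlt | hgt
            · rw [cdiv_zero_of hN0 (by omega) (by omega),
                cdiv_zero_of hN0 (by omega) (by omega)]
            · rw [cdiv_one_of hN0 (by omega) (by omega),
                cdiv_one_of hN0 (by omega) (by omega)]
          linarith
        · have harg : prk S (π v) - prk S (π k) + (netDisp S Q u - netDisp S Q k)
              = prk S (π u) - prk S (π k)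
                + (netDisp S ((u,v)::Q) u - netDisp S ((u,v)::Q) k) + (-1) * (S.card:ℤ) := by
            omega
          rw [harg, cdiv_add_mul _ (-1) hNne] at IH
          have h1 : cdiv (prk S (π v) - prk S (π k)) (S.card:ℤ) = 0 :=
            cdiv_zero_of hN0 (by omega) (by omega)
          have h2 : cdiv (prk S (π u) - prk S (π k)) (S.card:ℤ) = 1 :=
            cdiv_one_of hN0 (by omega) (by omega)
          linarith
    · by_cases huk : u = k
      · subst huk
        by_cases hvi : v = i
        · -- Case B1 : q = (k, i)
          subst hvi
          rw [hπ'v, hπ'u] at IH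
          rw [if_neg huv, if_pos rfl] at hndi
          rw [if_pos rfl, if_neg (fun h => huv h.symm)] at hndk
          rw [if_neg (fun h => huv (congrArg Prod.fst h)), if_pos rfl] at hsc
          rcases hwrap with hnw | hw
          · have harg : prk S (π u) - prk S (π v) + (netDisp S Q v - netDisp S Q u)
                = prk S (π v) - prk S (π u)
                  + (netDisp S ((u,v)::Q) v - netDisp S ((u,v)::Q) u) + 0 * (S.card:ℤ) := by
              omega
            rw [harg, cdiv_add_mul _ 0 hNne] at IH
            have h1 : cdiv (prk S (π u) - prk S (π v)) (S.card:ℤ) = 0 :=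
              cdiv_zero_of hN0 (by omega) (by omega)
            have h2 : cdiv (prk S (π v) - prk S (π u)) (S.card:ℤ) = 1 :=
              cdiv_one_of hN0 (by omega) (by omega)
            linarith
          · have harg : prk S (π u) - prk S (π v) + (netDisp S Q v - netDisp S Q u)
                = prk S (π v) - prk S (π u)
                  + (netDisp S ((u,v)::Q) v - netDisp S ((u,v)::Q) u) + 2 * (S.card:ℤ) := by
              omega
            rw [harg, cdiv_add_mul _ 2 hNne] at IH
            have h1 : cdiv (prk S (π u) - prk S (π v)) (S.card:ℤ) = 1 :=
              cdiv_one_of hN0 (by omega) (by omega)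
            have h2 : cdiv (prk S (π v) - prk S (π u)) (S.card:ℤ) = 0 :=
              cdiv_zero_of hN0 (by omega) (by omega)
            linarith
        · -- Case B2 : q = (k, v), v ∉ {i,k}, i ∉ {u,v}
          have hiu : i ≠ u := hik
          have hiv : i ≠ v := fun h => hvi h.symm
          have hπ'i : applySwap π (u,v) i = π i := by
            rw [applySwap_apply, if_neg hiu, if_neg hiv]
          rw [hπ'i, hπ'u] at IH
          rw [if_neg (fun h => hiu h.symm), if_neg hvi] at hndi
          rw [if_pos rfl, if_neg (fun h => huv h.symm)] at hndk
          rw [if_neg (fun h => hiu (congrArg Prod.fst h).symm),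
              if_neg (fun h => hvi (congrArg Prod.snd h))] at hsc
          have hriu : prk S (π i) ≠ prk S (π u) :=
            prk_ne hπi hπu (fun h => hiu (π.injective h))
          have hriv : prk S (π i) ≠ prk S (π v) :=
            prk_ne hπi hπv (fun h => hiv (π.injective h))
          rcases hwrap with hnw | hw
          · have harg : prk S (π i) - prk S (π v) + (netDisp S Q i - netDisp S Q u)
                = prk S (π i) - prk S (π u)
                  + (netDisp S ((u,v)::Q) i - netDisp S ((u,v)::Q) u) + 0 * (S.card:ℤ) := by
              omega
            rw [harg, cdiv_add_mul _ 0 hNne] at IH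
            have hcd : cdiv (prk S (π i) - prk S (π v)) (S.card:ℤ)
                = cdiv (prk S (π i) - prk S (π u)) (S.card:ℤ) := by
              rcases lt_or_gt_of_ne hriu with hlt | hgt
              · rw [cdiv_zero_of hN0 (by omega) (by omega),
                  cdiv_zero_of hN0 (by omega) (by omega)]
              · rw [cdiv_one_of hN0 (by omega) (by omega),
                  cdiv_one_of hN0 (by omega) (by omega)]
            linarith
          · have harg : prk S (π i) - prk S (π v) + (netDisp S Q i - netDisp S Q u)
                = prk S (π i) - prk S (π u)
                  + (netDisp S ((u,v)::Q) i - netDisp S ((u,v)::Q) u) + 1 * (S.card:ℤ) := by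
              omega
            rw [harg, cdiv_add_mul _ 1 hNne] at IH
            have h1 : cdiv (prk S (π i) - prk S (π v)) (S.card:ℤ) = 1 :=
              cdiv_one_of hN0 (by omega) (by omega)
            have h2 : cdiv (prk S (π i) - prk S (π u)) (S.card:ℤ) = 0 :=
              cdiv_zero_of hN0 (by omega) (by omega)
            linarith
      · by_cases hvi : v = i
        · -- Case C1 : q = (u, i), u ∉ {i,k}
          subst hvi
          have hπ'k : applySwap π (u,v) k = π k := by
            rw [applySwap_apply, if_neg (fun h => huk h.symm), if_neg (fun h => hik h.symm)]
          rw [hπ'v, hπ'k] at IH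
          rw [if_neg huv, if_pos rfl] at hndi
          rw [if_neg huk, if_neg hik] at hndk
          rw [if_neg (fun h => huv (congrArg Prod.fst h)),
              if_neg (fun h => huk (congrArg Prod.fst h))] at hsc
          have hruk : prk S (π u) ≠ prk S (π k) :=
            prk_ne hπu hπk (fun h => huk (π.injective h))
          have hrvk : prk S (π v) ≠ prk S (π k) :=
            prk_ne hπv hπk (fun h => hik (π.injective h))
          rcases hwrap with hnw | hw
          · have harg : prk S (π u) - prk S (π k) + (netDisp S Q v - netDisp S Q k)
                = prk S (π v) - prk S (π k)
                  + (netDisp S ((u,v)::Q) v - netDisp S ((u,v)::Q) k) + 0 * (S.card:ℤ) := by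
              omega
            rw [harg, cdiv_add_mul _ 0 hNne] at IH
            have hcd : cdiv (prk S (π u) - prk S (π k)) (S.card:ℤ)
                = cdiv (prk S (π v) - prk S (π k)) (S.card:ℤ) := by
              rcases lt_or_gt_of_ne hruk with hlt | hgt
              · rw [cdiv_zero_of hN0 (by omega) (by omega),
                  cdiv_zero_of hN0 (by omega) (by omega)]
              · rw [cdiv_one_of hN0 (by omega) (by omega),
                  cdiv_one_of hN0 (by omega) (by omega)]
            linarith
          · have harg : prk S (π u) - prk S (π k) + (netDisp S Q v - netDisp S Q k)
                = prk S (π v) - prk S (π k)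
                  + (netDisp S ((u,v)::Q) v - netDisp S ((u,v)::Q) k) + 1 * (S.card:ℤ) := by
              omega
            rw [harg, cdiv_add_mul _ 1 hNne] at IH
            have h1 : cdiv (prk S (π u) - prk S (π k)) (S.card:ℤ) = 1 :=
              cdiv_one_of hN0 (by omega) (by omega)
            have h2 : cdiv (prk S (π v) - prk S (π k)) (S.card:ℤ) = 0 :=
              cdiv_zero_of hN0 (by omega) (by omega)
            linarith
        · by_cases hvk : v = k
          · -- Case C2 : q = (u, k), u ∉ {i,k}
            subst hvk
            have hπ'i : applySwap π (u,v) i = π i := by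
              rw [applySwap_apply, if_neg (fun h => hui h.symm), if_neg (fun h => hik h)]
            rw [hπ'i, hπ'v] at IH
            rw [if_neg hui, if_neg (fun h => hik h.symm)] at hndi
            rw [if_neg huv, if_pos rfl] at hndk
            rw [if_neg (fun h => hui (congrArg Prod.fst h)),
                if_neg (fun h => huv (congrArg Prod.fst h))] at hsc
            have hriu : prk S (π i) ≠ prk S (π u) :=
              prk_ne hπi hπu (fun h => hui ((π.injective h).symm))
            have hriv : prk S (π i) ≠ prk S (π v) :=
              prk_ne hπi hπv (fun h => hik (π.injective h))
            rcases hwrap with hnw | hw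
            · have harg : prk S (π i) - prk S (π u) + (netDisp S Q i - netDisp S Q v)
                  = prk S (π i) - prk S (π v)
                    + (netDisp S ((u,v)::Q) i - netDisp S ((u,v)::Q) v) + 0 * (S.card:ℤ) := by
                omega
              rw [harg, cdiv_add_mul _ 0 hNne] at IH
              have hcd : cdiv (prk S (π i) - prk S (π u)) (S.card:ℤ)
                  = cdiv (prk S (π i) - prk S (π v)) (S.card:ℤ) := by
                rcases lt_or_gt_of_ne hriu with hlt | hgt
                · rw [cdiv_zero_of hN0 (by omega) (by omega),
                    cdiv_zero_of hN0 (by omega) (by omega)]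
                · rw [cdiv_one_of hN0 (by omega) (by omega),
                    cdiv_one_of hN0 (by omega) (by omega)]
              linarith
            · have harg : prk S (π i) - prk S (π u) + (netDisp S Q i - netDisp S Q v)
                  = prk S (π i) - prk S (π v)
                    + (netDisp S ((u,v)::Q) i - netDisp S ((u,v)::Q) v) + (-1) * (S.card:ℤ) := by
                omega
              rw [harg, cdiv_add_mul _ (-1) hNne] at IH
              have h1 : cdiv (prk S (π i) - prk S (π u)) (S.card:ℤ) = 0 :=
                cdiv_zero_of hN0 (by omega) (by omega)
              have h2 : cdiv (prk S (π i) - prk S (π v)) (S.card:ℤ) = 1 :=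
                cdiv_one_of hN0 (by omega) (by omega)
              linarith
          · -- Case C3 : q disjoint from {i,k}
            have hiu : i ≠ u := fun h => hui h.symm
            have hiv : i ≠ v := fun h => hvi h.symm
            have hku : k ≠ u := fun h => huk h.symm
            have hkv : k ≠ v := fun h => hvk h.symm
            have hπ'i : applySwap π (u,v) i = π i := by
              rw [applySwap_apply, if_neg hiu, if_neg hiv]
            have hπ'k : applySwap π (u,v) k = π k := by
              rw [applySwap_apply, if_neg hku, if_neg hkv]
            rw [hπ'i, hπ'k] at IH
            rw [if_neg hui, if_neg hvi] at hndi
            rw [if_neg huk, if_neg hvk] at hndk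
            rw [if_neg (fun h => hui (congrArg Prod.fst h)),
                if_neg (fun h => huk (congrArg Prod.fst h))] at hsc
            have harg : prk S (π i) - prk S (π k) + (netDisp S Q i - netDisp S Q k)
                = prk S (π i) - prk S (π k)
                  + (netDisp S ((u,v)::Q) i - netDisp S ((u,v)::Q) k) + 0 * (S.card:ℤ) := by
              omega
            rw [harg, cdiv_add_mul _ 0 hNne] at IH
            linarith

private lemma phi_mono {a b n : ℤ} (hn : 0 < n) (h : a ≤ b) :
    a - cdiv a n ≤ b - cdiv b n := by
  have := cdiv_le_of_le hn h
  linarith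

private lemma cdiv_sub_n {a n : ℤ} (hn : n ≠ 0) : cdiv (a - n) n = cdiv a n - 1 := by
  have h := cdiv_add_mul (a - n) 1 hn
  rw [show a - n + 1 * n = a by ring] at h
  linarith

private lemma cdiv_add_n {a n : ℤ} (hn : n ≠ 0) : cdiv (a + n) n = cdiv a n + 1 := by
  have h := cdiv_add_mul a 1 hn
  rw [show a + 1 * n = a + n by ring] at h
  exact h


/-- If the net displacement vector of a sequence of cyclically adjacent swaps satisfies
`d(i) - d(j) ≤ n` for all `i, j ∈ S`, `k ∈ S` attains the maximum or the minimum of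
`d`, and `d'(i) = d(i) - c(i,k)`, then `d'(i) - d'(j) ≤ n - 1` for all
`i, j ∈ S \ {k}`. -/
theorem restricted_disp_bound (S : Finset ℕ) (hpos : ∀ x ∈ S, 0 < x)
    (n : ℕ) (hcard : S.card = n)
    (π : Equiv.Perm ℕ) (hπ : IsPermOf S π)
    (Q : List (ℕ × ℕ)) (hQ : IsSwapSeq S π Q)
    (hopt : ∀ i ∈ S, ∀ j ∈ S, netDisp S Q i - netDisp S Q j ≤ (n : ℤ))
    (k : ℕ) (hk : k ∈ S)
    (hext : (∀ i ∈ S, netDisp S Q i ≤ netDisp S Q k) ∨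
      (∀ i ∈ S, netDisp S Q k ≤ netDisp S Q i)) :
    ∀ i ∈ S.erase k, ∀ j ∈ S.erase k,
      (netDisp S Q i - swapCount Q i k) - (netDisp S Q j - swapCount Q j k) ≤
        (n : ℤ) - 1 := by
  subst hcard
  intro i hi j hj
  rw [Finset.mem_erase] at hi hj
  obtain ⟨hik, hiS⟩ := hi
  obtain ⟨hjk, hjS⟩ := hj
  have hN0 : (0:ℤ) < (S.card:ℤ) := by exact_mod_cast Finset.card_pos.mpr ⟨k, hk⟩
  have hNne : ((S.card:ℤ)) ≠ 0 := ne_of_gt hN0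
  have hmi := main_lemma S Q π hπ hQ i hiS k hk hik
  have hmj := main_lemma S Q π hπ hQ j hjS k hk hjk
  set N := (S.card : ℤ) with hNdef
  set ai := prk S (π i) - prk S (π k) with hai
  set aj := prk S (π j) - prk S (π k) with haj
  set Ai := ai + (netDisp S Q i - netDisp S Q k) with hAi
  set Aj := aj + (netDisp S Q j - netDisp S Q k) with hAj
  rcases hext with hmax | hmin
  · have hdi : netDisp S Q i ≤ netDisp S Q k := hmax i hiS
    have hdj : netDisp S Q k - netDisp S Q j ≤ N := hopt k hk j hjS
    have h1 : Ai - cdiv Ai N ≤ ai - cdiv ai N := phi_mono hN0 (by omega)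
    have h2 : (aj - N) - cdiv (aj - N) N ≤ Aj - cdiv Aj N := phi_mono hN0 (by omega)
    have h3 : cdiv (aj - N) N = cdiv aj N - 1 := cdiv_sub_n hNne
    linarith
  · have hdj : netDisp S Q k ≤ netDisp S Q j := hmin j hjS
    have hdi : netDisp S Q i - netDisp S Q k ≤ N := hopt i hiS k hk
    have h1 : aj - cdiv aj N ≤ Aj - cdiv Aj N := phi_mono hN0 (by omega)
    have h2 : Ai - cdiv Ai N ≤ (ai + N) - cdiv (ai + N) N := phi_mono hN0 (by omega)
    have h3 : cdiv (ai + N) N = cdiv ai N + 1 := cdiv_add_n hNne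
    linarith
end
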